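/- arXiv:2204.11226 — 2 statements merged into one kernel-verified Lean document; each statement's English description precedes it below -/
import Mathlib

section
/- Let F = {e^{iθ} : θ₀ < θ < π − θ₀} with θ₀ ∈ (−π/2, π/2), and let χ̂_F be the Poisson extension of the characteristic function of F. Then for all z in the open unit disk, ∂χ̂_F/∂z = (cos θ₀)/(πi) · 1/((e^{iθ₀} − z)(e^{−iθ₀} + z)). -/
open Complex Metric Real

/-- The Poisson integral of the characteristic function of the arc
`F = {e^{iθ} : θ₀ < θ < π − θ₀}`. -/
noncomputable def poissonArc (θ₀ : ℝ) (z : ℂ) : ℝ :=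
  (∫ θ in θ₀..(Real.pi - θ₀), ((Complex.exp (θ * Complex.I) + z) /
      (Complex.exp (θ * Complex.I) - z)).re) / (2 * Real.pi)

/-- The Wirtinger derivative `∂u/∂z = (1/2)(∂u/∂x − i ∂u/∂y)` of a real-valued function
`u` on `ℂ`, expressed via the real Fréchet derivative. -/
noncomputable def wirtinger (u : ℂ → ℝ) (z : ℂ) : ℂ :=
  (1 / 2) * ((fderiv ℝ u z 1 : ℝ) - Complex.I * (fderiv ℝ u z Complex.I : ℝ))

/-- The holomorphic function whose real part is `poissonArc θ₀` on the unit disk. -/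
noncomputable def arcF (θ₀ : ℝ) (z : ℂ) : ℂ :=
  (((Real.pi : ℂ) - 2 * θ₀) - 2 * Complex.I * Complex.log (1 + z * Complex.exp (θ₀ * Complex.I))
    + 2 * Complex.I * Complex.log (1 - z * Complex.exp (-θ₀ * Complex.I))) / (2 * Real.pi)

lemma abs_mul_exp_lt {z : ℂ} (hz : ‖z‖ < 1) (φ : ℝ) :
    ‖z * Complex.exp (φ * Complex.I)‖ < 1 := by
  rw [norm_mul, Complex.norm_exp_ofReal_mul_I, mul_one]; exact hz

lemma re_one_add_pos {w : ℂ} (h : ‖w‖ < 1) : 0 < (1 + w).re := by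
  have h1 := Complex.abs_re_le_norm w
  simp only [Complex.add_re, Complex.one_re]
  have := abs_le.mp h1
  linarith

lemma re_one_sub_pos {w : ℂ} (h : ‖w‖ < 1) : 0 < (1 - w).re := by
  have h1 := Complex.abs_re_le_norm w
  simp only [Complex.sub_re, Complex.one_re]
  have := abs_le.mp h1
  linarith

lemma exp_sub_ne {z : ℂ} (hz : ‖z‖ < 1) (φ : ℝ) :
    Complex.exp (φ * Complex.I) - z ≠ 0 := by
  intro h
  have : Complex.exp (φ * Complex.I) = z := by linear_combination h
  rw [← this, Complex.norm_exp_ofReal_mul_I] at hz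
  exact lt_irrefl _ hz

lemma one_sub_mul_ne {z : ℂ} (hz : ‖z‖ < 1) (φ : ℝ) :
    1 - z * Complex.exp (φ * Complex.I) ≠ 0 :=
  fun h => (re_one_sub_pos (abs_mul_exp_lt hz φ)).ne' (by rw [h]; rfl)

lemma one_add_mul_ne {z : ℂ} (hz : ‖z‖ < 1) (φ : ℝ) :
    1 + z * Complex.exp (φ * Complex.I) ≠ 0 :=
  fun h => (re_one_add_pos (abs_mul_exp_lt hz φ)).ne' (by rw [h]; rfl)

/-- FTC antiderivative computation: the θ-derivative of `θ - 2i log(1 - z e^{-iθ})` is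
the Poisson kernel integrand. -/
lemma hasDerivAt_G {z : ℂ} (hz : ‖z‖ < 1) (θ : ℝ) :
    HasDerivAt (fun θ : ℝ => (θ : ℂ) - 2 * Complex.I *
        Complex.log (1 - z * Complex.exp (-(θ : ℂ) * Complex.I)))
      ((Complex.exp (θ * Complex.I) + z) / (Complex.exp (θ * Complex.I) - z)) θ := by
  have h1 : HasDerivAt (fun θ : ℝ => (θ : ℂ)) 1 θ := by
    have h := Complex.ofRealCLM.hasDerivAt (x := θ); simp at h; exact h
  have h2 : HasDerivAt (fun θ : ℝ => -(θ : ℂ) * Complex.I) (-Complex.I) θ := by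
    simpa using (h1.neg.mul_const Complex.I)
  have h3 : HasDerivAt (fun θ : ℝ => Complex.exp (-(θ : ℂ) * Complex.I))
      (Complex.exp (-(θ : ℂ) * Complex.I) * -Complex.I) θ := h2.cexp
  have h4 : HasDerivAt (fun θ : ℝ => 1 - z * Complex.exp (-(θ : ℂ) * Complex.I))
      (-(z * (Complex.exp (-(θ : ℂ) * Complex.I) * -Complex.I))) θ :=
    ((h3.const_mul z).const_sub 1)
  have hne : 1 - z * Complex.exp (-(θ : ℂ) * Complex.I) ≠ 0 := by
    have := one_sub_mul_ne hz (-θ)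
    simpa [Complex.ofReal_neg, neg_mul] using this
  have hre : 0 < (1 - z * Complex.exp (-(θ : ℂ) * Complex.I)).re ∨
      (1 - z * Complex.exp (-(θ : ℂ) * Complex.I)).im ≠ 0 := by
    left
    have := re_one_sub_pos (abs_mul_exp_lt hz (-θ))
    simpa [Complex.ofReal_neg, neg_mul] using this
  have h5 := h4.clog_real hre
  have h6 := h1.sub ((h5.const_mul (2 * Complex.I)))
  refine h6.congr_deriv ?_
  symm
  have hez : Complex.exp (θ * Complex.I) - z ≠ 0 := exp_sub_ne hz θ
  have he0 : Complex.exp ((θ : ℂ) * Complex.I) ≠ 0 := Complex.exp_ne_zero _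
  have hinv : Complex.exp (-(θ : ℂ) * Complex.I) = (Complex.exp ((θ : ℂ) * Complex.I))⁻¹ := by
    rw [← Complex.exp_neg]; ring_nf
  rw [hinv] at hne ⊢
  field_simp at hne ⊢
  ring_nf
  ring_nf at hne
  field_simp
  linear_combination (2*z) * Complex.I_sq

lemma intervalIntegrable_kernel {z : ℂ} (hz : ‖z‖ < 1) (a b : ℝ) :
    IntervalIntegrable (fun θ : ℝ => (Complex.exp (θ * Complex.I) + z) /
      (Complex.exp (θ * Complex.I) - z)) MeasureTheory.volume a b := by
  apply Continuous.intervalIntegrable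
  apply Continuous.div
  · exact (Complex.continuous_exp.comp (by continuity)).add continuous_const
  · exact (Complex.continuous_exp.comp (by continuity)).sub continuous_const
  · intro θ; exact exp_sub_ne hz θ

/-- On the unit disk, `poissonArc θ₀` is the real part of `arcF θ₀`. -/
lemma poissonArc_eq_re {θ₀ : ℝ} {z : ℂ} (hz : ‖z‖ < 1) :
    poissonArc θ₀ z = (arcF θ₀ z).re := by
  have hint := intervalIntegrable_kernel hz θ₀ (Real.pi - θ₀)
  have hftc := intervalIntegral.integral_eq_sub_of_hasDerivAt
    (f := fun θ : ℝ => (θ : ℂ) - 2 * Complex.I *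
        Complex.log (1 - z * Complex.exp (-(θ : ℂ) * Complex.I)))
    (fun θ _ => hasDerivAt_G hz θ) hint
  have hre : (∫ θ in θ₀..(Real.pi - θ₀), ((Complex.exp (θ * Complex.I) + z) /
      (Complex.exp (θ * Complex.I) - z)).re) =
      (∫ θ in θ₀..(Real.pi - θ₀), (Complex.exp (θ * Complex.I) + z) /
      (Complex.exp (θ * Complex.I) - z)).re :=
    Complex.reCLM.intervalIntegral_comp_comm hint
  have hexp : Complex.exp (-((Real.pi : ℂ) - θ₀) * Complex.I) =
      -Complex.exp ((θ₀ : ℂ) * Complex.I) := by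
    rw [show -((Real.pi : ℂ) - θ₀) * Complex.I = (θ₀:ℂ) * Complex.I + -((Real.pi:ℂ) * Complex.I) by ring,
      Complex.exp_add, Complex.exp_neg, Complex.exp_pi_mul_I]
    norm_num
  have hnum : ((↑(Real.pi - θ₀):ℂ) - 2*Complex.I*Complex.log (1 - z * Complex.exp (-(↑(Real.pi - θ₀):ℂ) * Complex.I)))
      - ((↑θ₀:ℂ) - 2*Complex.I*Complex.log (1 - z * Complex.exp (-(↑θ₀:ℂ) * Complex.I)))
      = ((Real.pi : ℂ) - 2 * θ₀) - 2 * Complex.I * Complex.log (1 + z * Complex.exp (θ₀ * Complex.I))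
        + 2 * Complex.I * Complex.log (1 - z * Complex.exp (-θ₀ * Complex.I)) := by
    rw [show (-(↑(Real.pi - θ₀):ℂ) * Complex.I) = -((Real.pi:ℂ) - θ₀)*Complex.I by push_cast; ring, hexp,
        show (1 - z * -Complex.exp ((θ₀:ℂ) * Complex.I)) = 1 + z * Complex.exp ((θ₀:ℂ)*Complex.I) by ring]
    push_cast
    ring
  rw [poissonArc, hre, hftc]
  rw [hnum, arcF,
    show (2*(Real.pi:ℂ)) = ((2*Real.pi : ℝ):ℂ) by push_cast; ring, Complex.div_ofReal_re]

/-- Wirtinger derivative of the real part of a complex-differentiable function. -/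
lemma wirtinger_re {F : ℂ → ℂ} {c z : ℂ} (hF : HasDerivAt F c z) :
    wirtinger (fun w => (F w).re) z = c / 2 := by
  have hfd : HasFDerivAt (fun w => (F w).re)
      (Complex.reCLM.comp ((ContinuousLinearMap.smulRight (1 : ℂ →L[ℂ] ℂ) c).restrictScalars ℝ)) z :=
    Complex.reCLM.hasFDerivAt.comp z (hF.hasFDerivAt.restrictScalars ℝ)
  rw [wirtinger, hfd.fderiv]
  simp only [ContinuousLinearMap.coe_comp', Function.comp_apply,
    ContinuousLinearMap.coe_restrictScalars', ContinuousLinearMap.smulRight_apply,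
    ContinuousLinearMap.one_apply, Complex.reCLM_apply, one_smul, smul_eq_mul, one_mul]
  have h1 : (Complex.I * c).re = -c.im := by simp [Complex.mul_re]
  rw [h1]
  have := Complex.re_add_im c
  push_cast
  linear_combination (1/2 : ℂ) * this

lemma final_algebra (e e' z cosθ piC : ℂ) (hne1 : e - z ≠ 0) (hne2 : e' + z ≠ 0)
    (hne3 : 1 + z * e ≠ 0) (hne4 : 1 - z * e' ≠ 0) (hπ : piC ≠ 0)
    (hcos : cosθ * 2 = e + e') (hprod : e * e' = 1) :
    ((-(2 * Complex.I * (e / (1 + z * e))) + 2 * Complex.I * (-e' / (1 - z * e'))) / (2 * piC)) / 2 =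
      cosθ / (piC * Complex.I) * (1 / ((e - z) * (e' + z))) := by
  have h1 : e / (1 + z * e) = 1 / (e' + z) := by
    rw [div_eq_div_iff hne3 hne2]; linear_combination hprod
  have h2 : e' / (1 - z * e') = 1 / (e - z) := by
    rw [div_eq_div_iff hne4 hne1]; linear_combination hprod
  rw [h1, show -e' / (1 - z * e') = -(e' / (1 - z * e')) by ring, h2]
  have hI : Complex.I ≠ 0 := Complex.I_ne_zero
  have h3 : (1/(e'+z) + 1/(e-z)) = cosθ * 2 / ((e-z)*(e'+z)) := by
    rw [div_add_div _ _ hne2 hne1, div_eq_div_iff (mul_ne_zero hne2 hne1) (mul_ne_zero hne1 hne2)]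
    linear_combination (-(e-z)*(e'+z))*hcos
  calc ((-(2 * Complex.I * (1/(e'+z))) + 2 * Complex.I * -(1 / (e - z))) / (2 * piC)) / 2
      = -Complex.I/(2*piC) * (1/(e'+z) + 1/(e-z)) := by ring
    _ = -Complex.I/(2*piC) * (cosθ*2/((e-z)*(e'+z))) := by rw [h3]
    _ = cosθ / (piC * Complex.I) * (1 / ((e - z) * (e' + z))) := by
        rw [div_mul_div_comm, div_mul_div_comm, div_eq_div_iff
          (mul_ne_zero (mul_ne_zero two_ne_zero hπ) (mul_ne_zero hne1 hne2))
          (mul_ne_zero (mul_ne_zero hπ hI) (mul_ne_zero hne1 hne2))]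
        linear_combination (-2*cosθ*piC*(e-z)*(e'+z)) * Complex.I_sq

/-- For `F = {e^{iθ} : θ₀ < θ < π − θ₀}` with `θ₀ ∈ (−π/2, π/2)` and `z`
in the open unit disk,
`∂χ̂_F/∂z = (cos θ₀)/(π i) · 1/((e^{iθ₀} − z)(e^{−iθ₀} + z))`. -/
theorem wirtinger_poissonArc (θ₀ : ℝ) (hθ₀ : θ₀ ∈ Set.Ioo (-(Real.pi / 2)) (Real.pi / 2))
    (z : ℂ) (hz : z ∈ ball (0 : ℂ) 1) :
    wirtinger (poissonArc θ₀) z =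
      (Real.cos θ₀ : ℂ) / (Real.pi * Complex.I) *
        (1 / ((Complex.exp (θ₀ * Complex.I) - z) * (Complex.exp (-θ₀ * Complex.I) + z))) := by
  have hz' : ‖z‖ < 1 := by simpa [Complex.dist_eq] using mem_ball.mp hz
  have hlog1 : HasDerivAt (fun w : ℂ => Complex.log (1 + w * Complex.exp (θ₀ * Complex.I)))
      (Complex.exp (θ₀ * Complex.I) / (1 + z * Complex.exp (θ₀ * Complex.I))) z := by
    have hin : HasDerivAt (fun w : ℂ => 1 + w * Complex.exp ((θ₀:ℂ) * Complex.I))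
        (Complex.exp ((θ₀:ℂ) * Complex.I)) z := by
      simpa using ((hasDerivAt_id z).mul_const (Complex.exp ((θ₀:ℂ) * Complex.I))).const_add 1
    exact hin.clog (Or.inl (re_one_add_pos (abs_mul_exp_lt hz' θ₀)))
  have hlog2 : HasDerivAt (fun w : ℂ => Complex.log (1 - w * Complex.exp (-θ₀ * Complex.I)))
      (-Complex.exp (-θ₀ * Complex.I) / (1 - z * Complex.exp (-θ₀ * Complex.I))) z := by
    have hin : HasDerivAt (fun w : ℂ => 1 - w * Complex.exp (-(θ₀:ℂ) * Complex.I))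
        (-Complex.exp (-(θ₀:ℂ) * Complex.I)) z := by
      simpa using (((hasDerivAt_id z).mul_const (Complex.exp (-(θ₀:ℂ) * Complex.I))).const_sub 1)
    have hrepos : 0 < (1 - z * Complex.exp (-(θ₀:ℂ) * Complex.I)).re := by
      have := re_one_sub_pos (abs_mul_exp_lt hz' (-θ₀))
      simpa [Complex.ofReal_neg, neg_mul] using this
    exact hin.clog (Or.inl hrepos)
  set c : ℂ := ((-(2 * Complex.I * (Complex.exp (θ₀ * Complex.I) / (1 + z * Complex.exp (θ₀ * Complex.I))))
      + 2 * Complex.I * (-Complex.exp (-θ₀ * Complex.I) / (1 - z * Complex.exp (-θ₀ * Complex.I))))) / (2 * Real.pi)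
      with hc
  have hF : HasDerivAt (arcF θ₀) c z := by
    unfold arcF
    have := (((hlog1.const_mul (2 * Complex.I)).const_sub (((Real.pi : ℂ) - 2 * θ₀)))
      |>.add (hlog2.const_mul (2 * Complex.I))).div_const (2 * Real.pi)
    simpa [hc] using this
  have hev : poissonArc θ₀ =ᶠ[nhds z] (fun w => (arcF θ₀ w).re) := by
    filter_upwards [isOpen_ball.mem_nhds hz] with w hw
    exact poissonArc_eq_re (by simpa [Complex.dist_eq] using mem_ball.mp hw)
  have hw1 : wirtinger (poissonArc θ₀) z = wirtinger (fun w => (arcF θ₀ w).re) z := by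
    unfold wirtinger
    rw [hev.fderiv_eq]
  rw [hw1, wirtinger_re hF, hc]
  have hne1 : Complex.exp ((θ₀:ℝ) * Complex.I) - z ≠ 0 := exp_sub_ne hz' θ₀
  have hne2 : Complex.exp (-(θ₀:ℂ) * Complex.I) + z ≠ 0 := by
    intro h
    have h' : Complex.exp ((-θ₀ : ℝ) * Complex.I) - (-z) = 0 := by
      push_cast
      linear_combination h
    exact exp_sub_ne (by simpa using hz') (-θ₀) h'
  have hne3 : 1 + z * Complex.exp ((θ₀:ℝ) * Complex.I) ≠ 0 := one_add_mul_ne hz' θ₀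
  have hne4 : 1 - z * Complex.exp (-(θ₀:ℂ) * Complex.I) ≠ 0 := by
    have := one_sub_mul_ne hz' (-θ₀)
    simpa [Complex.ofReal_neg] using this
  have hπ : (Real.pi : ℂ) ≠ 0 := by exact_mod_cast Real.pi_ne_zero
  have hcos : (Real.cos θ₀ : ℂ) * 2 =
      Complex.exp ((θ₀:ℂ) * Complex.I) + Complex.exp (-(θ₀:ℂ) * Complex.I) := by
    rw [Complex.ofReal_cos, mul_comm, Complex.two_cos]
  have hprod : Complex.exp ((θ₀:ℂ) * Complex.I) * Complex.exp (-(θ₀:ℂ) * Complex.I) = 1 := by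
    rw [← Complex.exp_add, show (θ₀:ℂ) * Complex.I + -(θ₀:ℂ) * Complex.I = 0 by ring,
      Complex.exp_zero]
  exact final_algebra _ _ _ _ _ hne1 hne2 hne3 hne4 hπ hcos hprod
end

section
/- Let F = {e^{iθ} : θ₀ < θ < π − θ₀} with θ₀ ∈ (−π/2, π/2), and let α = 1/2 + θ₀/π. Then the level set L_F(α) = {z ∈ D : χ̂_F(z) = α} is the open chord (segment) joining −e^{−iθ₀} and e^{iθ₀}, and for every z on this segment one has (e^{iθ₀} − z)(e^{−iθ₀} + z) = 1 − |z|². -/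
open Complex Metric Real

lemma aux_deriv (z : ℂ) (hz : ‖z‖ < 1) (θ : ℝ) :
    HasDerivAt (fun t : ℝ => t + 2 * (Complex.log (1 - z * Complex.exp (-t * I))).im)
      (((Complex.exp (θ * I) + z) / (Complex.exp (θ * I) - z)).re) θ := by
  have habs : ∀ t : ℝ, ‖z * Complex.exp (-t * I)‖ < 1 := by
    intro t
    rw [norm_mul, Complex.norm_exp]
    simpa using hz
  have hre : 0 < (1 - z * Complex.exp (-θ * I)).re := by
    have h1 := abs_re_le_norm (z * Complex.exp (-θ * I))
    have h2 := habs θ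
    have : (1 - z * Complex.exp (-θ * I)).re = 1 - (z * Complex.exp (-θ * I)).re := by
      simp
    rw [this]
    have := abs_le.mp h1
    linarith [this.2]
  have hden : (1 : ℂ) - z * Complex.exp (-θ * I) ≠ 0 := by
    intro h
    rw [h] at hre
    simp at hre
  have hne : Complex.exp (θ * I) - z ≠ 0 := by
    intro h
    have hez : Complex.exp ((θ : ℂ) * I) = z := sub_eq_zero.mp h
    have : ‖Complex.exp ((θ : ℂ) * I)‖ = 1 := by
      rw [Complex.norm_exp]; simp
    rw [hez] at this
    rw [this] at hz
    exact lt_irrefl _ hz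
  -- derivative of the inner function
  have h0 : HasDerivAt (fun t : ℝ => (-(t : ℂ) * I)) (-I) θ := by
    simpa using ((Complex.ofRealCLM.hasDerivAt (x := θ)).neg.mul_const I)
  have h1 : HasDerivAt (fun t : ℝ => Complex.exp (-(t : ℂ) * I))
      (Complex.exp (-(θ : ℂ) * I) * (-I)) θ := h0.cexp
  have hg : HasDerivAt (fun t : ℝ => 1 - z * Complex.exp (-(t : ℂ) * I))
      (-(z * (Complex.exp (-(θ : ℂ) * I) * (-I)))) θ := (h1.const_mul z).const_sub 1
  have hslit : (1 : ℂ) - z * Complex.exp (-(θ : ℂ) * I) ∈ Complex.slitPlane :=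
    Complex.mem_slitPlane_iff.mpr (Or.inl hre)
  have hlog := hg.clog_real hslit
  have him : HasDerivAt (fun t : ℝ => (Complex.log (1 - z * Complex.exp (-(t : ℂ) * I))).im)
      ((-(z * (Complex.exp (-(θ : ℂ) * I) * (-I))) / (1 - z * Complex.exp (-(θ : ℂ) * I))).im)
      θ := Complex.imCLM.hasFDerivAt.comp_hasDerivAt θ hlog
  have htot := (hasDerivAt_id θ).add (him.const_mul 2)
  refine htot.congr_deriv ?_
  -- now show the derivative values agree
  have hmul : Complex.exp ((θ : ℂ) * I) * Complex.exp (-(θ : ℂ) * I) = 1 := by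
    rw [← Complex.exp_add]
    have : ((θ : ℂ) * I + -(θ : ℂ) * I) = 0 := by ring
    rw [this, Complex.exp_zero]
  have key : -(z * (Complex.exp (-(θ : ℂ) * I) * (-I))) / (1 - z * Complex.exp (-(θ : ℂ) * I))
      = I * z / (Complex.exp ((θ : ℂ) * I) - z) := by
    rw [div_eq_div_iff hden hne]
    linear_combination (z * I) * hmul
  have key2 : (Complex.exp ((θ : ℂ) * I) + z) / (Complex.exp ((θ : ℂ) * I) - z)
      = 1 + 2 * (z / (Complex.exp ((θ : ℂ) * I) - z)) := by
    field_simp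
    ring
  rw [key, key2, mul_div_assoc]
  simp [Complex.add_re, Complex.mul_im, Complex.mul_re]

lemma poissonArc_formula (θ₀ : ℝ) (z : ℂ) (hz : ‖z‖ < 1) :
    poissonArc θ₀ z = ((Real.pi - 2 * θ₀)
      + 2 * ((1 + z * Complex.exp (θ₀ * I)).arg - (1 - z * Complex.exp (-θ₀ * I)).arg))
      / (2 * Real.pi) := by
  have hne : ∀ θ : ℝ, Complex.exp (θ * I) - z ≠ 0 := by
    intro θ h
    have hez : Complex.exp ((θ : ℂ) * I) = z := sub_eq_zero.mp h
    have h1 : ‖Complex.exp ((θ : ℂ) * I)‖ = 1 := by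
      rw [Complex.norm_exp]; simp
    rw [hez] at h1
    rw [h1] at hz
    exact lt_irrefl _ hz
  have hcont : Continuous fun θ : ℝ =>
      ((Complex.exp (θ * I) + z) / (Complex.exp (θ * I) - z)).re := by
    apply Complex.continuous_re.comp
    exact Continuous.div
      ((Complex.continuous_exp.comp (by continuity)).add continuous_const)
      ((Complex.continuous_exp.comp (by continuity)).sub continuous_const)
      hne
  have hFTC := intervalIntegral.integral_eq_sub_of_hasDerivAt
    (f := fun t : ℝ => t + 2 * (Complex.log (1 - z * Complex.exp (-t * I))).im)
    (f' := fun θ : ℝ => ((Complex.exp (θ * I) + z) / (Complex.exp (θ * I) - z)).re)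
    (a := θ₀) (b := Real.pi - θ₀)
    (fun x _ => aux_deriv z hz x) (hcont.intervalIntegrable _ _)
  unfold poissonArc
  rw [hFTC]
  beta_reduce
  have hexp : Complex.exp (-(↑(Real.pi - θ₀)) * I) = - Complex.exp ((θ₀ : ℂ) * I) := by
    have h1 : (-(↑(Real.pi - θ₀)) * I : ℂ) = (θ₀ : ℂ) * I - (Real.pi : ℂ) * I := by
      push_cast; ring
    rw [h1, Complex.exp_sub, Complex.exp_pi_mul_I]
    field_simp
  rw [hexp]
  have h2 : (1 : ℂ) - z * -Complex.exp ((θ₀ : ℂ) * I) = 1 + z * Complex.exp ((θ₀ : ℂ) * I) := by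
    ring
  rw [h2, Complex.log_im, Complex.log_im]
  ring

/-- For `F = {e^{iθ} : θ₀ < θ < π − θ₀}` with `θ₀ ∈ (−π/2, π/2)` and
`α = 1/2 + θ₀/π`, the level set `L_F(α) = {z ∈ D : χ̂_F(z) = α}` is the open segment
joining `−e^{−iθ₀}` and `e^{iθ₀}`, and on this segment
`(e^{iθ₀} − z)(e^{−iθ₀} + z) = 1 − |z|²`. -/
theorem levelSet_poissonArc (θ₀ : ℝ) (hθ₀ : θ₀ ∈ Set.Ioo (-(Real.pi / 2)) (Real.pi / 2))
    (α : ℝ) (hα : α = 1 / 2 + θ₀ / Real.pi) :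
    {z : ℂ | z ∈ ball (0 : ℂ) 1 ∧ poissonArc θ₀ z = α} =
        openSegment ℝ (-Complex.exp (-θ₀ * Complex.I)) (Complex.exp (θ₀ * Complex.I)) ∧
      ∀ z ∈ openSegment ℝ (-Complex.exp (-θ₀ * Complex.I)) (Complex.exp (θ₀ * Complex.I)),
        (Complex.exp (θ₀ * Complex.I) - z) * (Complex.exp (-θ₀ * Complex.I) + z) =
          ((1 : ℝ) - ‖z‖ ^ 2 : ℝ) := by
  obtain ⟨hθl, hθr⟩ := hθ₀
  have hπ : (0 : ℝ) < Real.pi := Real.pi_pos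
  set u : ℂ := Complex.exp (θ₀ * I) with hu
  set v : ℂ := Complex.exp (-θ₀ * I) with hv
  have hneg : (-(θ₀ : ℂ) * I) = ((-θ₀ : ℝ) : ℂ) * I := by push_cast; ring
  have huv : u * v = 1 := by
    rw [hu, hv, ← Complex.exp_add]
    have : ((θ₀ : ℂ) * I + -(θ₀ : ℂ) * I) = 0 := by ring
    rw [this, Complex.exp_zero]
  have hu0 : u ≠ 0 := Complex.exp_ne_zero _
  have hv0 : v ≠ 0 := Complex.exp_ne_zero _
  have hcos : 0 < Real.cos θ₀ := Real.cos_pos_of_mem_Ioo ⟨hθl, hθr⟩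
  have hargu : u.arg = θ₀ := by
    rw [hu, Complex.exp_mul_I, Complex.arg_cos_add_sin_mul_I ⟨by linarith, by linarith⟩]
  have hargv : v.arg = -θ₀ := by
    rw [hv, hneg, Complex.exp_mul_I, Complex.arg_cos_add_sin_mul_I ⟨by linarith, by linarith⟩]
  have h1 : u = Complex.cos θ₀ + Complex.sin θ₀ * I := by rw [hu, Complex.exp_mul_I]
  have h2 : v = Complex.cos θ₀ - Complex.sin θ₀ * I := by
    rw [hv, hneg, Complex.exp_mul_I]
    push_cast
    rw [Complex.cos_neg, Complex.sin_neg]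
    ring
  have hsum : u + v = 2 * Complex.cos (θ₀ : ℂ) := by
    rw [h1, h2]; ring
  have habsu : ‖u‖ = 1 := by rw [hu, Complex.norm_exp]; simp
  have habsv : ‖v‖ = 1 := by rw [hv, Complex.norm_exp]; simp
  have hconju : (starRingEnd ℂ) u = v := by
    rw [hu, hv, ← Complex.exp_conj]
    congr 1
    simp [Complex.conj_I]
  have hconjv : (starRingEnd ℂ) v = u := by
    rw [hu, hv, ← Complex.exp_conj]
    congr 1
    simp [Complex.conj_I]
  -- everything we need about points of the open segment
  have hseg : ∀ z ∈ openSegment ℝ (-v) u,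
      (u - z) * (v + z) = (((1 : ℝ) - ‖z‖ ^ 2 : ℝ) : ℂ) ∧
        ‖z‖ < 1 ∧ poissonArc θ₀ z = α := by
    rintro z ⟨s, t, hs, ht, hst, rfl⟩
    set z : ℂ := s • (-v) + t • u with hz
    have hstC : (s : ℂ) + t = 1 := by exact_mod_cast hst
    have hzz : z = -(s : ℂ) * v + (t : ℂ) * u := by
      rw [hz, Complex.real_smul, Complex.real_smul]; ring
    have hconjz : (starRingEnd ℂ) z = -(s : ℂ) * u + (t : ℂ) * v := by
      rw [hzz]
      simp only [map_add, map_mul, map_neg, Complex.conj_ofReal, hconju, hconjv]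
    have hid2 : (u - z) * (v + z) = (((1 : ℝ) - ‖z‖ ^ 2 : ℝ) : ℂ) := by
      have hrhs : (((1 : ℝ) - ‖z‖ ^ 2 : ℝ) : ℂ) = 1 - z * (starRingEnd ℂ) z := by
        rw [Complex.sq_norm, Complex.mul_conj]
        push_cast
        ring
      rw [hrhs, hconjz, hzz]
      linear_combination huv + (((s : ℂ) + t) * u * v - (t : ℂ) * u ^ 2 - (s : ℂ) * v ^ 2) * hstC
    have hid : (u - z) * (v + z) = ((4 * s * t * Real.cos θ₀ ^ 2 : ℝ) : ℂ) := by
      rw [hzz]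
      push_cast
      linear_combination (-(u * v + (t : ℂ) * u ^ 2 + (s : ℂ) * v ^ 2)) * hstC
        + ((s : ℂ) * t * (u + v + 2 * Complex.cos (θ₀ : ℂ))) * hsum
    have hreal : (1 : ℝ) - ‖z‖ ^ 2 = 4 * s * t * Real.cos θ₀ ^ 2 := by
      have := hid2.symm.trans hid
      exact_mod_cast this
    have habs : ‖z‖ < 1 := by
      have h4 : 0 < 4 * s * t * Real.cos θ₀ ^ 2 := by positivity
      nlinarith [norm_nonneg z]
    refine ⟨hid2, habs, ?_⟩
    -- compute the Poisson integral
    have hw1 : 1 + z * u = ((2 * t * Real.cos θ₀ : ℝ) : ℂ) * u := by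
      rw [hzz]
      push_cast
      linear_combination (-(u * v)) * hstC - huv + ((t : ℂ) * u) * hsum
    have hw2 : 1 - z * v = ((2 * s * Real.cos θ₀ : ℝ) : ℂ) * v := by
      rw [hzz]
      push_cast
      linear_combination (-(u * v)) * hstC - huv + ((s : ℂ) * v) * hsum
    have harg1 : (1 + z * u).arg = θ₀ := by
      rw [hw1, Complex.arg_real_mul u (by positivity), hargu]
    have harg2 : (1 - z * v).arg = -θ₀ := by
      rw [hw2, Complex.arg_real_mul v (by positivity), hargv]
    rw [poissonArc_formula θ₀ z habs, ← hu, ← hv, harg1, harg2, hα]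
    field_simp
    ring
  constructor
  · ext z
    simp only [Set.mem_setOf_eq]
    constructor
    · rintro ⟨hzball, hp⟩
      have hz1 : ‖z‖ < 1 := by
        simpa [Metric.mem_ball, Complex.dist_eq] using hzball
      rw [poissonArc_formula θ₀ z hz1, ← hu, ← hv, hα] at hp
      have harg : (1 + z * u).arg - (1 - z * v).arg = 2 * θ₀ := by
        field_simp at hp
        linarith
      have habsZU : ‖z * u‖ < 1 := by rw [norm_mul, habsu]; simpa using hz1
      have habsZV : ‖z * v‖ < 1 := by rw [norm_mul, habsv]; simpa using hz1
      have hre1 : 0 < (1 + z * u).re := by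
        have h := abs_le.mp (Complex.abs_re_le_norm (z * u))
        simp only [Complex.add_re, Complex.one_re]
        linarith [h.1]
      have hre2 : 0 < (1 - z * v).re := by
        have h := abs_le.mp (Complex.abs_re_le_norm (z * v))
        simp only [Complex.sub_re, Complex.one_re]
        linarith [h.2]
      have hw10 : (1 : ℂ) + z * u ≠ 0 := by
        intro h; rw [h] at hre1; simp at hre1
      have hw20 : (1 : ℂ) - z * v ≠ 0 := by
        intro h; rw [h] at hre2; simp at hre2
      have hb1 := abs_lt.mp (Complex.abs_arg_lt_pi_div_two_iff.mpr (Or.inl hre1))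
      have hb2 := abs_lt.mp (Complex.abs_arg_lt_pi_div_two_iff.mpr (Or.inl hre2))
      have hp' : v + z = v * (1 + z * u) := by linear_combination (-z) * huv
      have hq' : u - z = u * (1 - z * v) := by linear_combination z * huv
      have hp0 : v + z ≠ 0 := by rw [hp']; exact mul_ne_zero hv0 hw10
      have hq0 : u - z ≠ 0 := by rw [hq']; exact mul_ne_zero hu0 hw20
      have hargp : (v + z).arg = -θ₀ + (1 + z * u).arg := by
        rw [hp', Complex.arg_mul hv0 hw10 ⟨by rw [hargv]; linarith [hb1.1],
          by rw [hargv]; linarith [hb1.2]⟩, hargv]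
      have hargq : (u - z).arg = θ₀ + (1 - z * v).arg := by
        rw [hq', Complex.arg_mul hu0 hw20 ⟨by rw [hargu]; linarith [hb2.1],
          by rw [hargu]; linarith [hb2.2]⟩, hargu]
      have heqarg : (v + z).arg = (u - z).arg := by
        rw [hargp, hargq]; linarith
      have h := (Complex.arg_eq_arg_iff hp0 hq0).mp heqarg
      set r : ℝ := ‖u - z‖ / ‖v + z‖ with hrdef
      have hr : 0 < r := div_pos (norm_pos_iff.mpr hq0) (norm_pos_iff.mpr hp0)
      have hrc : (r : ℂ) * (v + z) = u - z := by
        rw [hrdef]; push_cast; exact h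
      have h1r : (0 : ℝ) < 1 + r := by linarith
      have h1rC : (1 + (r : ℂ)) ≠ 0 := by
        intro hcon
        have : (1 + r : ℝ) = 0 := by exact_mod_cast hcon.symm ▸ (by push_cast; ring : ((1 + r : ℝ) : ℂ) = 1 + (r : ℂ))
        linarith
      refine ⟨r / (1 + r), 1 / (1 + r), by positivity, by positivity,
        by rw [← add_div, add_comm r 1, div_self (ne_of_gt h1r)], ?_⟩
      rw [Complex.real_smul, Complex.real_smul]
      push_cast
      rw [div_mul_eq_mul_div, div_mul_eq_mul_div, ← add_div, div_eq_iff h1rC]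
      linear_combination -hrc
    · intro hzseg
      obtain ⟨hid, habs, hpval⟩ := hseg z hzseg
      exact ⟨by simpa [Metric.mem_ball, Complex.dist_eq] using habs, hpval⟩
  · intro z hzseg
    exact (hseg z hzseg).1
end
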